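/- Let G be a finite simple graph and E_cs an edge contraction set with edge contraction partition π. Then for every vertex ṽ of the contraction G ⫽ E_cs, d_ṽ(G ⫽ E_cs) ≤ (∑_{v ∈ C_ṽ(π)} d_v(G)) − 2(|C_ṽ(π)| − 1). -/

import Mathlib

open Finset

/-- Counting pairs fiberwise over the first coordinate. -/
lemma card_pairs_aux {V : Type*} [Fintype V] [DecidableEq V] (s : Finset V)
    (P : V → V → Prop) [∀ a b, Decidable (P a b)] :
    ((s ×ˢ (Finset.univ : Finset V)).filter fun p => P p.1 p.2).card
      = ∑ v ∈ s, (Finset.univ.filter fun w => P v w).card := by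
  rw [Finset.card_eq_sum_card_fiberwise
    (f := Prod.fst) (t := s)
    (fun p hp => (Finset.mem_product.1 (Finset.mem_filter.1 hp).1).1)]
  refine Finset.sum_congr rfl fun v hv => ?_
  apply Finset.card_bij (fun (p : V × V) _ => p.2)
  · intro p hp
    simp only [Finset.mem_filter, Finset.mem_product, Finset.mem_univ, and_true,
      true_and] at hp ⊢
    exact hp.2 ▸ hp.1.2
  · intro p hp q hq h
    simp only [Finset.mem_filter] at hp hq
    exact Prod.ext (hp.2.trans hq.2.symm) h
  · intro w hw
    simp only [Finset.mem_filter, Finset.mem_univ, true_and] at hw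
    exact ⟨(v, w), by simp [hv, hw], rfl⟩

/-- A connected component with `m` vertices contains at least `m - 1` edges,
expressed via the degree sum. -/
lemma two_mul_card_sub_one_le_sum_degree {V : Type*} [Fintype V] [DecidableEq V]
    (H : SimpleGraph V) [DecidableRel H.Adj] (c : H.ConnectedComponent)
    (s : Finset V) (hs : ∀ v, v ∈ s ↔ H.connectedComponentMk v = c) :
    2 * (s.card - 1) ≤ ∑ v ∈ s, H.degree v := by
  classical
  rcases s.eq_empty_or_nonempty with rfl | ⟨r, hr⟩
  · simp
  have hreach : ∀ v ∈ s, H.Reachable v r := by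
    intro v hv
    exact SimpleGraph.ConnectedComponent.exact (((hs v).1 hv).trans ((hs r).1 hr).symm)
  have hnext : ∀ v, v ∈ s → v ≠ r → ∃ u, H.Adj v u ∧ H.dist u r < H.dist v r := by
    intro v hv hvr
    obtain ⟨p, hp⟩ := (hreach v hv).exists_walk_length_eq_dist
    cases p with
    | nil => exact absurd rfl hvr
    | cons h q =>
      refine ⟨_, h, ?_⟩
      rw [SimpleGraph.Walk.length_cons] at hp
      calc H.dist _ r ≤ q.length := SimpleGraph.dist_le q
        _ < q.length + 1 := Nat.lt_succ_self _
        _ = H.dist v r := hp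
  set next : V → V := fun v =>
    if h : ∃ u, H.Adj v u ∧ H.dist u r < H.dist v r then h.choose else v with hnextdef
  have hnext_spec : ∀ v ∈ s.erase r, H.Adj v (next v) ∧ H.dist (next v) r < H.dist v r := by
    intro v hv
    rw [Finset.mem_erase] at hv
    have h := hnext v hv.2 hv.1
    simp only [hnextdef, dif_pos h]
    exact h.choose_spec
  set T := ((s ×ˢ (Finset.univ : Finset V)).filter fun p => H.Adj p.1 p.2) with hT
  have hTcard : T.card = ∑ v ∈ s, H.degree v := by
    rw [hT, card_pairs_aux]
    refine Finset.sum_congr rfl fun v _ => ?_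
    rw [← SimpleGraph.card_neighborFinset_eq_degree, SimpleGraph.neighborFinset_eq_filter]
  have hinj : ((s.erase r) ×ˢ (Finset.univ : Finset Bool)).card ≤ T.card := by
    apply Finset.card_le_card_of_injOn
      (fun x => if x.2 then (next x.1, x.1) else (x.1, next x.1))
    · intro x hx
      rw [Finset.mem_coe, Finset.mem_product] at hx
      have hx1 := hx.1
      have hsp := hnext_spec x.1 hx1
      have hx1s : x.1 ∈ s := (Finset.mem_erase.1 hx1).2
      have hns : next x.1 ∈ s := by
        rw [hs]
        rw [← SimpleGraph.ConnectedComponent.connectedComponentMk_eq_of_adj hsp.1]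
        exact (hs x.1).1 hx1s
      rcases Bool.eq_false_or_eq_true x.2 with hb | hb <;>
        simp only [Finset.mem_coe, hT, hb, Bool.false_eq_true, if_true, if_false, Finset.mem_filter,
          Finset.mem_product, Finset.mem_univ, and_true] <;>
        exact ⟨by simp [hns, hx1s], by first | exact hsp.1.symm | exact hsp.1⟩
    · rintro ⟨x1, bx⟩ hx ⟨y1, by'⟩ hy hxy
      rw [Finset.coe_product, Set.mem_prod] at hx hy
      have hxd := hnext_spec x1 hx.1
      have hyd := hnext_spec y1 hy.1
      have h1 := hxd.2
      have h2 := hyd.2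
      cases bx <;> cases by' <;> simp only [Bool.false_eq_true, if_true, if_false,
        ite_true, ite_false, Prod.mk.injEq] at hxy ⊢
      · exact ⟨hxy.1, trivial⟩
      · exfalso; rw [hxy.2, hxy.1] at h1; omega
      · exfalso; rw [hxy.1, hxy.2] at h1; omega
      · exact ⟨hxy.2, trivial⟩
  rw [hTcard] at hinj
  calc 2 * (s.card - 1) = (s.erase r).card * 2 := by
        rw [Finset.card_erase_of_mem hr]; ring
    _ = ((s.erase r) ×ˢ (Finset.univ : Finset Bool)).card := by
        rw [Finset.card_product, Finset.card_univ, Fintype.card_bool]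
    _ ≤ _ := hinj


/-- The simple graph contraction of `G` over the partition of its vertex set given by the
fibers of `f` (cells are fibers): distinct cells are adjacent iff some pair of their members
is adjacent in `G` (self-loops and duplicate edges removed). -/
def contraction {V W : Type*} (G : SimpleGraph V) (f : V → W) : SimpleGraph W where
  Adj i j := i ≠ j ∧ ∃ u v, f u = i ∧ f v = j ∧ G.Adj u v
  symm := ⟨fun _ _ ⟨hne, u, v, hu, hv, h⟩ => ⟨hne.symm, v, u, hv, hu, h.symm⟩⟩
  loopless := ⟨fun _ ⟨h, _⟩ => h rfl⟩

/-- The edge-based contraction `G ⫽ E_cs`: the contraction of `G` over the partition of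
`V(G)` into connected components of the graph `(V(G), E_cs)`. -/
def contractionE {V : Type*} (G : SimpleGraph V) (Ecs : Set (Sym2 V)) :
    SimpleGraph (SimpleGraph.fromEdgeSet Ecs).ConnectedComponent :=
  contraction G (SimpleGraph.fromEdgeSet Ecs).connectedComponentMk

/-- (Degree-contraction bound.) For an edge contraction set `E_cs` with
edge contraction partition `π` (connected components of `(V, E_cs)`), every vertex `vt` of
`G ⫽ E_cs` satisfies
`d_vt(G ⫽ E_cs) ≤ (∑_{v ∈ C_vt} d_v(G)) − 2(|C_vt| − 1)`. -/
theorem degree_contractionE_le {n : ℕ} (G : SimpleGraph (Fin n)) [DecidableRel G.Adj]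
    (Ecs : Set (Sym2 (Fin n))) (hE : Ecs ⊆ G.edgeSet)
    (vt : (SimpleGraph.fromEdgeSet Ecs).ConnectedComponent) :
    (((contractionE G Ecs).neighborSet vt).ncard : ℤ) ≤
      (∑ᶠ v ∈ {v : Fin n | (SimpleGraph.fromEdgeSet Ecs).connectedComponentMk v = vt},
        (G.degree v : ℤ)) -
      2 * (({v : Fin n | (SimpleGraph.fromEdgeSet Ecs).connectedComponentMk v = vt}.ncard : ℤ)
        - 1) := by
  classical
  have hle : SimpleGraph.fromEdgeSet Ecs ≤ G := by
    rw [← SimpleGraph.fromEdgeSet_edgeSet (G := G)]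
    exact SimpleGraph.fromEdgeSet_mono hE
  set C : Set (Fin n) := {v | (SimpleGraph.fromEdgeSet Ecs).connectedComponentMk v = vt}
    with hC
  have hCfin : C.Finite := Set.toFinite C
  set s : Finset (Fin n) := hCfin.toFinset with hsdef
  have hmem : ∀ v, v ∈ s ↔ (SimpleGraph.fromEdgeSet Ecs).connectedComponentMk v = vt := by
    intro v
    rw [hsdef, Set.Finite.mem_toFinset]
    rfl
  obtain ⟨r, hrvt⟩ := vt.exists_rep
  have hrvt' : (SimpleGraph.fromEdgeSet Ecs).connectedComponentMk r = vt := hrvt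
  have hr : r ∈ s := (hmem r).2 hrvt'
  -- the three pair counts
  set ain := ∑ v ∈ s, (Finset.univ.filter fun w => G.Adj v w ∧ w ∈ s).card with hain
  set aout := ∑ v ∈ s, (Finset.univ.filter fun w => G.Adj v w ∧ w ∉ s).card with haout
  have h2 : 2 * (s.card - 1) ≤ ∑ v ∈ s, (SimpleGraph.fromEdgeSet Ecs).degree v :=
    two_mul_card_sub_one_le_sum_degree (SimpleGraph.fromEdgeSet Ecs) vt s hmem
  have h2' : ∑ v ∈ s, (SimpleGraph.fromEdgeSet Ecs).degree v ≤ ain := by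
    rw [hain]
    apply Finset.sum_le_sum
    intro v hv
    rw [← SimpleGraph.card_neighborFinset_eq_degree, SimpleGraph.neighborFinset_eq_filter]
    apply Finset.card_le_card
    intro w hw
    simp only [Finset.mem_filter, Finset.mem_univ, true_and] at hw ⊢
    refine ⟨hle hw, (hmem w).2 ?_⟩
    rw [← SimpleGraph.ConnectedComponent.connectedComponentMk_eq_of_adj hw]
    exact (hmem v).1 hv
  have htotal : ∑ v ∈ s, G.degree v = ain + aout := by
    rw [hain, haout, ← Finset.sum_add_distrib]
    refine Finset.sum_congr rfl fun v _ => ?_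
    rw [← SimpleGraph.card_neighborFinset_eq_degree, SimpleGraph.neighborFinset_eq_filter,
      ← Finset.filter_filter, ← Finset.filter_filter]
    exact (Finset.card_filter_add_card_filter_not
      (s := Finset.univ.filter (G.Adj v)) (p := fun w => w ∈ s)).symm
  -- bounding the contracted degree
  set N := (contractionE G Ecs).neighborSet vt with hNdef
  set Tout := ((s ×ˢ (Finset.univ : Finset (Fin n))).filter
    fun p => G.Adj p.1 p.2 ∧ p.2 ∉ s) with hTout
  set g : (SimpleGraph.fromEdgeSet Ecs).ConnectedComponent → Fin n × Fin n := fun u =>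
    if h : (contractionE G Ecs).Adj vt u
    then ((And.right h).choose, (And.right h).choose_spec.choose) else (r, r) with hg
  have hgspec : ∀ u ∈ N, (g u).1 ∈ s ∧ (g u).2 ∉ s ∧ G.Adj (g u).1 (g u).2 ∧
      (SimpleGraph.fromEdgeSet Ecs).connectedComponentMk (g u).2 = u := by
    intro u hu
    have hadj : (contractionE G Ecs).Adj vt u := hu
    simp only [hg, dif_pos hadj]
    obtain ⟨h1, h2, h3⟩ := (And.right hadj).choose_spec.choose_spec
    refine ⟨(hmem _).2 h1, ?_, h3, h2⟩
    rw [hmem]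
    intro hb
    exact (And.left hadj) (h2.symm.trans hb).symm
  have hNle : N.ncard ≤ Tout.card := by
    have hinj : Set.InjOn g N := by
      intro u1 h1 u2 h2 hgeq
      have s1 := (hgspec u1 h1).2.2.2
      have s2 := (hgspec u2 h2).2.2.2
      rw [← s1, ← s2, hgeq]
    calc N.ncard = (g '' N).ncard := (Set.ncard_image_of_injOn hinj).symm
      _ ≤ (↑Tout : Set (Fin n × Fin n)).ncard := by
          apply Set.ncard_le_ncard ?_ (Finset.finite_toSet Tout)
          rintro p ⟨u, hu, rfl⟩
          obtain ⟨m1, m2, m3, -⟩ := hgspec u hu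
          simp only [hTout, Finset.coe_filter, Set.mem_setOf_eq, Finset.mem_product,
            Finset.mem_univ, and_true]
          exact ⟨m1, m3, m2⟩
      _ = Tout.card := Set.ncard_coe_finset _
  have hToutcard : Tout.card = aout := by
    rw [hTout, haout]
    exact card_pairs_aux s fun a b => G.Adj a b ∧ b ∉ s
  -- put the pieces together over ℤ
  have key : N.ncard + 2 * (s.card - 1) ≤ ∑ v ∈ s, G.degree v := by
    have := h2.trans h2'
    rw [htotal]
    omega
  have hs1 : 1 ≤ s.card := Finset.card_pos.2 ⟨r, hr⟩
  have hCs : C = ↑s := (Set.Finite.coe_toFinset hCfin).symm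
  rw [hCs, finsum_mem_coe_finset, Set.ncard_coe_finset]
  have hcast : (∑ v ∈ s, (G.degree v : ℤ)) = ((∑ v ∈ s, G.degree v : ℕ) : ℤ) := by
    push_cast
    rfl
  zify [hs1] at key
  rw [hcast]
  linarith
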